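/- Let Θ ⊆ ℝ^d be open and let g : Θ → ℝ^{d×d} be a differentiable map whose value is symmetric positive definite for every θ, with inverse entries g^{bc}(θ). Suppose functions Γ^{(m)}_{abc}, T_{abc} : Θ → ℝ with T_{abc} symmetric in its indices satisfy the dual structure identity ∂_a g_{bc}(θ) = Γ^{(m)}_{abc}(θ) + Γ^{(m)}_{acb}(θ) − T_{abc}(θ) for all indices and θ, and that the parameterization is m-affine: Γ^{(m)}_{abc}(θ) = 0 for all indices and θ. Then the Jeffreys prior π_J(θ) = (det g(θ))^{1/2} satisfies ∂_a log π_J(θ) = −(1/2) T_a(θ) for all a, where T_a = Σ_{b,c} g^{bc} T_{abc}. Consequently, any priors π_e, π_m with ∂_a log π_m − ∂_a log π_e = T_a satisfy ∂_a log(π_e/π_m) = 2 ∂_a log π_J, i.e. π_e/π_m ∝ π_J^2 when Θ is connected. -/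

import Mathlib

/-- Partial derivative of `f : ℝ^d → ℝ` along the `a`-th coordinate. -/
noncomputable def pder {d : ℕ} (a : Fin d) (f : (Fin d → ℝ) → ℝ) (θ : Fin d → ℝ) : ℝ :=
  fderiv ℝ f θ (Pi.single a 1)

/-- Determinant as a continuous multilinear map in the rows. -/
noncomputable def detCM (d : ℕ) : ContinuousMultilinearMap ℝ (fun _ : Fin d => (Fin d → ℝ)) ℝ where
  toMultilinearMap := (Matrix.detRowAlternating (R := ℝ) (n := Fin d)).toMultilinearMap
  cont := by
    have h : Continuous fun M : Matrix (Fin d) (Fin d) ℝ => M.det :=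
      Continuous.matrix_det continuous_id
    exact h

lemma single_eq_smul_single {d : ℕ} (p : Fin d) (c : ℝ) :
    Pi.single p c = c • (Pi.single p (1 : ℝ) : Fin d → ℝ) := by
  ext q
  by_cases hq : q = p <;> simp [Pi.single_apply, hq]

lemma detCM_slot {d : ℕ} (A : Matrix (Fin d) (Fin d) ℝ) (i : Fin d) (w : Fin d → ℝ) :
    (detCM d).toContinuousLinearMap A i w = ∑ p : Fin d, w p * A.adjugate p i := by
  have hL : ∀ v : Fin d → ℝ, (detCM d).toContinuousLinearMap A i v
      = (A.updateRow i v).det := fun v => rfl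
  conv_lhs => rw [← Finset.univ_sum_single w, map_sum]
  refine Finset.sum_congr rfl fun p _ => ?_
  rw [single_eq_smul_single, map_smul, smul_eq_mul, hL, Matrix.adjugate_apply]

lemma hasFDerivAt_detcomp {d : ℕ} {M : (Fin d → ℝ) → Matrix (Fin d) (Fin d) ℝ} {θ : Fin d → ℝ}
    (h : ∀ i j, DifferentiableAt ℝ (fun θ' => M θ' i j) θ) :
    HasFDerivAt (fun θ' => (M θ').det)
      (∑ i : Fin d, ((detCM d).toContinuousLinearMap (M θ) i) ∘L
        (fderiv ℝ (fun θ' => M θ' i) θ)) θ := by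
  have hrow : ∀ i, HasFDerivAt (fun θ' => M θ' i) (fderiv ℝ (fun θ' => M θ' i) θ) θ :=
    fun i => (differentiableAt_pi.2 (h i)).hasFDerivAt
  exact HasFDerivAt.multilinear_comp (detCM d) hrow

lemma pder_detcomp {d : ℕ} {M : (Fin d → ℝ) → Matrix (Fin d) (Fin d) ℝ} {θ : Fin d → ℝ}
    (h : ∀ i j, DifferentiableAt ℝ (fun θ' => M θ' i j) θ) (a : Fin d) :
    pder a (fun θ' => (M θ').det) θ
      = ∑ i : Fin d, ∑ p : Fin d, pder a (fun θ' => M θ' i p) θ * (M θ).adjugate p i := by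
  rw [pder, (hasFDerivAt_detcomp h).fderiv]
  rw [ContinuousLinearMap.sum_apply]
  refine Finset.sum_congr rfl fun i _ => ?_
  rw [ContinuousLinearMap.comp_apply]
  have hfp : fderiv ℝ (fun θ' => M θ' i) θ
      = ContinuousLinearMap.pi (fun p => fderiv ℝ (fun θ' => M θ' i p) θ) :=
    fderiv_pi (h i)
  rw [hfp, detCM_slot]
  rfl


/-- In an m-affine parameterization (`Γ^{(m)} = 0`) with dual structure
`∂_a g_{bc} = Γ^{(m)}_{abc} + Γ^{(m)}_{acb} − T_{abc}`, the Jeffreys prior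
`π_J = (det g)^{1/2}` satisfies `∂_a log π_J = −(1/2) T_a`; consequently any e- and
m-parallel priors (`∂_a log π_m − ∂_a log π_e = T_a`) satisfy
`∂_a log(π_e/π_m) = 2 ∂_a log π_J`, i.e. `π_e/π_m ∝ π_J²` when `Θ` is connected. -/
theorem stmt_8 {d : ℕ} (Θ : Set (Fin d → ℝ)) (hΘ_open : IsOpen Θ)
    (g : (Fin d → ℝ) → Matrix (Fin d) (Fin d) ℝ)
    (hg_diff : ∀ b c : Fin d, ∀ θ ∈ Θ, DifferentiableAt ℝ (fun θ' => g θ' b c) θ)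
    (hg_symm : ∀ θ ∈ Θ, (g θ).IsSymm)
    (hg_pd : ∀ θ ∈ Θ, (g θ).PosDef)
    (Γm T : (Fin d → ℝ) → Fin d → Fin d → Fin d → ℝ)
    -- T is symmetric in its indices:
    (hT_symm₁ : ∀ θ ∈ Θ, ∀ a b c : Fin d, T θ a b c = T θ b a c)
    (hT_symm₂ : ∀ θ ∈ Θ, ∀ a b c : Fin d, T θ a b c = T θ a c b)
    -- the dual structure identity:
    (h_dual : ∀ θ ∈ Θ, ∀ a b c : Fin d,
      pder a (fun θ' => g θ' b c) θ = Γm θ a b c + Γm θ a c b - T θ a b c)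
    -- the parameterization is m-affine:
    (h_maffine : ∀ θ ∈ Θ, ∀ a b c : Fin d, Γm θ a b c = 0)
    (Ta : (Fin d → ℝ) → Fin d → ℝ)
    (hTa : ∀ θ ∈ Θ, ∀ a : Fin d, Ta θ a = ∑ b : Fin d, ∑ c : Fin d, (g θ)⁻¹ b c * T θ a b c)
    (πe πm : (Fin d → ℝ) → ℝ)
    (hπe_pos : ∀ θ ∈ Θ, 0 < πe θ) (hπm_pos : ∀ θ ∈ Θ, 0 < πm θ)
    (hπe_diff : ∀ θ ∈ Θ, DifferentiableAt ℝ πe θ)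
    (hπm_diff : ∀ θ ∈ Θ, DifferentiableAt ℝ πm θ)
    (h_em : ∀ θ ∈ Θ, ∀ a : Fin d,
      pder a (fun θ' => Real.log (πm θ')) θ - pder a (fun θ' => Real.log (πe θ')) θ = Ta θ a) :
    (∀ θ ∈ Θ, ∀ a : Fin d,
      pder a (fun θ' => Real.log (Real.sqrt (g θ').det)) θ = -(1 / 2) * Ta θ a) ∧
    (∀ θ ∈ Θ, ∀ a : Fin d,
      pder a (fun θ' => Real.log (πe θ' / πm θ')) θ =
        2 * pder a (fun θ' => Real.log (Real.sqrt (g θ').det)) θ) ∧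
    (IsConnected Θ → ∃ k : ℝ, 0 < k ∧
      ∀ θ ∈ Θ, πe θ / πm θ = k * (Real.sqrt (g θ).det) ^ 2) := by
  have hdetpos : ∀ θ ∈ Θ, 0 < (g θ).det := fun θ hθ => (hg_pd θ hθ).det_pos
  have hent : ∀ θ ∈ Θ, ∀ i j, DifferentiableAt ℝ (fun θ' => g θ' i j) θ :=
    fun θ hθ i j => hg_diff i j θ hθ
  have hdet_diff : ∀ θ ∈ Θ, DifferentiableAt ℝ (fun θ' => (g θ').det) θ := fun θ hθ =>
    (hasFDerivAt_detcomp (hent θ hθ)).differentiableAt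
  -- adjugate = det • inverse
  have hadj : ∀ θ ∈ Θ, ∀ p i, (g θ).adjugate p i = (g θ).det * (g θ)⁻¹ p i := by
    intro θ hθ p i
    have hdet := hdetpos θ hθ
    have h1 : (g θ)⁻¹ p i = ((g θ).det)⁻¹ * (g θ).adjugate p i := by
      rw [Matrix.inv_def]
      simp [Ring.inverse_eq_inv', Matrix.smul_apply, smul_eq_mul]
    rw [h1]
    field_simp
  -- Jacobi: derivative of det composed with g
  have hpder_det : ∀ θ ∈ Θ, ∀ a, pder a (fun θ' => (g θ').det) θ = -((g θ).det * Ta θ a) := by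
    intro θ hθ a
    rw [pder_detcomp (hent θ hθ) a]
    have hT : ∀ i p : Fin d, pder a (fun θ' => g θ' i p) θ = -(T θ a i p) := fun i p => by
      rw [h_dual θ hθ a i p, h_maffine θ hθ a i p, h_maffine θ hθ a p i]; ring
    have h1 : (∑ i : Fin d, ∑ p : Fin d, pder a (fun θ' => g θ' i p) θ * (g θ).adjugate p i)
        = ∑ i : Fin d, ∑ p : Fin d, -((g θ).det * ((g θ)⁻¹ p i * T θ a p i)) := by
      refine Finset.sum_congr rfl fun i _ => Finset.sum_congr rfl fun p _ => ?_
      rw [hT i p, hadj θ hθ p i, hT_symm₂ θ hθ a i p]; ring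
    rw [h1, Finset.sum_comm, hTa θ hθ a, Finset.mul_sum, ← Finset.sum_neg_distrib]
    refine Finset.sum_congr rfl fun b _ => ?_
    rw [Finset.mul_sum, ← Finset.sum_neg_distrib]
  -- derivative of log det
  have hlog_hasf : ∀ θ ∈ Θ, HasFDerivAt (fun θ' => Real.log ((g θ').det))
      ((((g θ).det)⁻¹ : ℝ) • (fderiv ℝ (fun θ' => (g θ').det) θ)) θ := fun θ hθ => by
    have := (Real.hasDerivAt_log (ne_of_gt (hdetpos θ hθ))).comp_hasFDerivAt θ
      (hdet_diff θ hθ).hasFDerivAt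
    exact this
  -- eventual equality log √det = (1/2) log det
  have heqs : ∀ θ ∈ Θ, (fun θ' => Real.log (Real.sqrt ((g θ').det)))
      =ᶠ[nhds θ] fun θ' => (1/2 : ℝ) * Real.log ((g θ').det) := by
    intro θ hθ
    have hev : ∀ᶠ θ' in nhds θ, 0 < (g θ').det :=
      (hdet_diff θ hθ).continuousAt.eventually (eventually_gt_nhds (hdetpos θ hθ))
    filter_upwards [hev] with x hx
    rw [Real.log_sqrt hx.le]; ring
  have hls_diff : ∀ θ ∈ Θ, DifferentiableAt ℝ
      (fun θ' => Real.log (Real.sqrt ((g θ').det))) θ := fun θ hθ =>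
    (Filter.EventuallyEq.differentiableAt_iff (heqs θ hθ)).2
      (((hlog_hasf θ hθ).const_mul (1/2 : ℝ)).differentiableAt)
  -- Part 1
  have P1 : ∀ θ ∈ Θ, ∀ a : Fin d,
      pder a (fun θ' => Real.log (Real.sqrt (g θ').det)) θ = -(1 / 2) * Ta θ a := by
    intro θ hθ a
    have hdne : (g θ).det ≠ 0 := ne_of_gt (hdetpos θ hθ)
    rw [pder, (heqs θ hθ).fderiv_eq, ((hlog_hasf θ hθ).const_mul (1/2 : ℝ)).fderiv]
    have hv : fderiv ℝ (fun θ' => (g θ').det) θ (Pi.single a 1) = -((g θ).det * Ta θ a) :=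
      hpder_det θ hθ a
    simp only [ContinuousLinearMap.smul_apply, smul_eq_mul, hv]
    field_simp
  -- differentiability of log πe, log πm, log (πe/πm)
  have hdiffe : ∀ θ ∈ Θ, DifferentiableAt ℝ (fun θ' => Real.log (πe θ')) θ := fun θ hθ =>
    ((Real.hasDerivAt_log (ne_of_gt (hπe_pos θ hθ))).comp_hasFDerivAt θ
      (hπe_diff θ hθ).hasFDerivAt).differentiableAt
  have hdiffm : ∀ θ ∈ Θ, DifferentiableAt ℝ (fun θ' => Real.log (πm θ')) θ := fun θ hθ =>
    ((Real.hasDerivAt_log (ne_of_gt (hπm_pos θ hθ))).comp_hasFDerivAt θ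
      (hπm_diff θ hθ).hasFDerivAt).differentiableAt
  have heq2 : ∀ θ ∈ Θ, (fun θ' => Real.log (πe θ' / πm θ'))
      =ᶠ[nhds θ] fun θ' => Real.log (πe θ') - Real.log (πm θ') := by
    intro θ hθ
    filter_upwards [hΘ_open.mem_nhds hθ] with x hx
    rw [Real.log_div (ne_of_gt (hπe_pos x hx)) (ne_of_gt (hπm_pos x hx))]
  have hlq_diff : ∀ θ ∈ Θ, DifferentiableAt ℝ (fun θ' => Real.log (πe θ' / πm θ')) θ :=
    fun θ hθ => (Filter.EventuallyEq.differentiableAt_iff (heq2 θ hθ)).2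
      ((hdiffe θ hθ).sub (hdiffm θ hθ))
  have hkey2 : ∀ θ ∈ Θ, ∀ a : Fin d, pder a (fun θ' => Real.log (πe θ' / πm θ')) θ
      = pder a (fun θ' => Real.log (πe θ')) θ - pder a (fun θ' => Real.log (πm θ')) θ := by
    intro θ hθ a
    simp only [pder]
    rw [(heq2 θ hθ).fderiv_eq, fderiv_fun_sub (hdiffe θ hθ) (hdiffm θ hθ)]
    simp [ContinuousLinearMap.sub_apply]
  -- Part 2
  have P2 : ∀ θ ∈ Θ, ∀ a : Fin d,
      pder a (fun θ' => Real.log (πe θ' / πm θ')) θ =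
        2 * pder a (fun θ' => Real.log (Real.sqrt (g θ').det)) θ := by
    intro θ hθ a
    rw [hkey2 θ hθ a, P1 θ hθ a]
    have := h_em θ hθ a
    linarith
  refine ⟨P1, P2, ?_⟩
  -- Part 3
  intro hconn
  set F : (Fin d → ℝ) → ℝ :=
    fun θ' => Real.log (πe θ' / πm θ') - 2 * Real.log (Real.sqrt ((g θ').det)) with hF
  have hFdiff : ∀ θ ∈ Θ, DifferentiableAt ℝ F θ := fun θ hθ =>
    (hlq_diff θ hθ).sub ((hls_diff θ hθ).const_mul 2)
  have hFderiv0 : ∀ θ ∈ Θ, fderiv ℝ F θ = 0 := by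
    intro θ hθ
    have hpd : ∀ a : Fin d, fderiv ℝ F θ (Pi.single a 1) = 0 := by
      intro a
      have h1 : fderiv ℝ F θ (Pi.single a 1)
          = pder a (fun θ' => Real.log (πe θ' / πm θ')) θ
            - 2 * pder a (fun θ' => Real.log (Real.sqrt ((g θ').det))) θ := by
        simp only [hF, pder]
        rw [fderiv_fun_sub (hlq_diff θ hθ) ((hls_diff θ hθ).const_mul 2),
          fderiv_const_mul (hls_diff θ hθ)]
        simp [ContinuousLinearMap.sub_apply, ContinuousLinearMap.smul_apply, smul_eq_mul]
      rw [h1, P2 θ hθ a]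
      ring
    apply ContinuousLinearMap.ext
    intro v
    conv_lhs => rw [show v = ∑ b : Fin d, Pi.single b (v b) from (Finset.univ_sum_single v).symm]
    rw [map_sum]
    simp only [ContinuousLinearMap.zero_apply]
    refine Finset.sum_eq_zero fun b _ => ?_
    rw [single_eq_smul_single, map_smul, hpd b, smul_zero]
  obtain ⟨θ₀, hθ₀⟩ := hconn.nonempty
  have hconst : ∀ θ ∈ Θ, F θ = F θ₀ := by
    haveI : PreconnectedSpace Θ := Subtype.preconnectedSpace hconn.isPreconnected
    have hlc : IsLocallyConstant (fun x : Θ => F x) := by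
      rw [IsLocallyConstant.iff_eventually_eq]
      intro x
      obtain ⟨ε, hε, hball⟩ := Metric.isOpen_iff.1 hΘ_open x x.2
      have hcball : ∀ y ∈ Metric.ball (x : Fin d → ℝ) ε, F y = F x := by
        intro y hy
        refine (convex_ball _ _).is_const_of_fderivWithin_eq_zero (𝕜 := ℝ) (f := F) ?_ ?_ hy
          (Metric.mem_ball_self hε)
        · intro z hz
          exact (hFdiff z (hball hz)).differentiableWithinAt
        · intro z hz
          rw [fderivWithin_of_isOpen Metric.isOpen_ball hz]
          exact hFderiv0 z (hball hz)
      have hmem : Subtype.val ⁻¹' (Metric.ball (x : Fin d → ℝ) ε) ∈ nhds x :=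
        (continuous_subtype_val.continuousAt).preimage_mem_nhds
          (Metric.ball_mem_nhds _ hε)
      filter_upwards [hmem] with y hy
      exact hcball y hy
    intro θ hθ
    exact hlc.apply_eq_of_preconnectedSpace ⟨θ, hθ⟩ ⟨θ₀, hθ₀⟩
  refine ⟨Real.exp (F θ₀), Real.exp_pos _, ?_⟩
  intro θ hθ
  have h1 : Real.log (πe θ / πm θ) = F θ₀ + 2 * Real.log (Real.sqrt ((g θ).det)) := by
    have h2 := hconst θ hθ
    simp only [hF] at h2
    linarith
  have hpos : 0 < πe θ / πm θ := div_pos (hπe_pos θ hθ) (hπm_pos θ hθ)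
  have hsq : 0 < Real.sqrt ((g θ).det) := Real.sqrt_pos.2 (hdetpos θ hθ)
  calc πe θ / πm θ = Real.exp (Real.log (πe θ / πm θ)) := (Real.exp_log hpos).symm
    _ = Real.exp (F θ₀) * Real.exp (2 * Real.log (Real.sqrt ((g θ).det))) := by
        rw [h1, Real.exp_add]
    _ = Real.exp (F θ₀) * (Real.sqrt ((g θ).det)) ^ 2 := by
        rw [two_mul, Real.exp_add, Real.exp_log hsq, sq]
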